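/- arXiv:1902.10362 — 5 statements merged into one kernel-verified Lean document; each statement's English description precedes it below -/
import Mathlib

section
/- Let H ⊆ K be Hilbert spaces, let U ∈ B(K) and U' ∈ B(H) be unitaries, and let c ∈ [0,1] be such that cU' is the compression of U to H (i.e., cU' = P_H U|_H where P_H is the orthogonal projection onto H). Let R denote the compression of U to H^⊥. Then ‖U − (U' ⊕ R)‖ ≤ 2√(1 − c²). -/
open ContinuousLinearMap

lemma orthogonalProjection_add_orthogonalProjection_orthogonal {E : Type*} [NormedAddCommGroup E]
    [InnerProductSpace ℂ E] (K : Submodule ℂ E) [K.HasOrthogonalProjection] (w : E) :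
    (K.orthogonalProjection w : E) + (Kᗮ.orthogonalProjection w : E) = w :=
  K.starProjection_add_starProjection_orthogonal w

/-- Auxiliary: if `cV'` is the compression of a unitary `V` to `H` with `V'` unitary,
then the part of `V h` in `Hᗮ` has squared norm `(1-c²)‖h‖²`. -/
lemma aux_perp_norm {K : Type*} [NormedAddCommGroup K] [InnerProductSpace ℂ K] [CompleteSpace K]
    (H : Submodule ℂ K) [CompleteSpace H]
    (V : K →L[ℂ] K) (V' : H →L[ℂ] H) (c : ℝ)
    (hV : V ∈ unitary (K →L[ℂ] K)) (hV' : V' ∈ unitary (H →L[ℂ] H))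
    (hcomp : ∀ x : H, (c : ℂ) • V' x = H.orthogonalProjection (V x)) (h : H) :
    ‖Hᗮ.orthogonalProjection (V h)‖ ^ 2 = (1 - c ^ 2) * ‖h‖ ^ 2 := by
  have h1 := Submodule.norm_sq_eq_add_norm_sq_projection (V h) H
  have h2 : ‖V (h : K)‖ = ‖h‖ := by
    rw [V.norm_map_of_mem_unitary hV]; exact Submodule.norm_coe h
  have h3 : ‖(H.orthogonalProjection (V h) : H)‖ = |c| * ‖h‖ := by
    rw [← hcomp h, norm_smul, V'.norm_map_of_mem_unitary hV', Complex.norm_real,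
      Real.norm_eq_abs]
  rw [h2, h3] at h1
  have := sq_abs c
  nlinarith [norm_nonneg h, abs_nonneg c]

set_option maxHeartbeats 1000000 in
/-- Let `H ⊆ K` be Hilbert spaces, `U ∈ B(K)` and `U' ∈ B(H)` unitaries, and `c ∈ [0,1]` such
that `cU'` is the compression of `U` to `H`. With `R` the compression of `U` to `H^⊥`,
`‖U − (U' ⊕ R)‖ ≤ 2√(1 − c²)`. -/
theorem stmt_2 {K : Type*} [NormedAddCommGroup K] [InnerProductSpace ℂ K] [CompleteSpace K]
    (H : Submodule ℂ K) [CompleteSpace H]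
    (U : K →L[ℂ] K) (U' : H →L[ℂ] H) (c : ℝ) (hc : c ∈ Set.Icc (0 : ℝ) 1)
    (hU : U ∈ unitary (K →L[ℂ] K)) (hU' : U' ∈ unitary (H →L[ℂ] H))
    (hcomp : ∀ x : H, (c : ℂ) • U' x = H.orthogonalProjection (U x)) :
    ‖U - (H.subtypeL ∘L U' ∘L H.orthogonalProjection
        + Hᗮ.subtypeL ∘L (Hᗮ.orthogonalProjection ∘L U ∘L Hᗮ.subtypeL)
          ∘L Hᗮ.orthogonalProjection)‖ ≤ 2 * Real.sqrt (1 - c ^ 2) := by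
  obtain ⟨hc0, hc1⟩ := hc
  set s := Real.sqrt (1 - c ^ 2) with hs
  have hs0 : 0 ≤ s := Real.sqrt_nonneg _
  have hs2 : s ^ 2 = 1 - c ^ 2 := Real.sq_sqrt (by nlinarith)
  have hcs : 1 - c ≤ s := by
    have h1 : (1 - c) = Real.sqrt ((1 - c) ^ 2) := (Real.sqrt_sq (by linarith)).symm
    rw [h1, hs]
    exact Real.sqrt_le_sqrt (by nlinarith)
  -- adjoints are unitary
  have hUs : adjoint U ∈ unitary (K →L[ℂ] K) := by
    rw [← star_eq_adjoint]; exact Unitary.star_mem hU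
  have hU's : adjoint U' ∈ unitary (H →L[ℂ] H) := by
    rw [← star_eq_adjoint]; exact Unitary.star_mem hU'
  -- the adjoint compression
  have hadj : ∀ k : H, (c : ℂ) • (adjoint U') k = H.orthogonalProjection ((adjoint U) k) := by
    intro k
    apply ext_inner_right ℂ
    intro y
    rw [inner_smul_left, adjoint_inner_left, Submodule.inner_orthogonalProjectionOnto_eq_of_mem_right,
      adjoint_inner_left]
    have h1 : ((U (y : K)) : K) = ((H.orthogonalProjection (U y) : H) : K)
        + ((Hᗮ.orthogonalProjection (U y) : Hᗮ) : K) :=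
      (orthogonalProjection_add_orthogonalProjection_orthogonal H _).symm
    rw [h1, inner_add_right,
      Submodule.inner_right_of_mem_orthogonal k.2 (Hᗮ.orthogonalProjection (U y)).2, add_zero,
      ← hcomp y]
    simp only [Submodule.coe_smul, inner_smul_right]
    rw [Complex.conj_ofReal, Submodule.coe_inner]
  -- key 1 : norm of perp part of U h for h ∈ H
  have key1 : ∀ h : H, ‖Hᗮ.orthogonalProjection (U h)‖ ^ 2 = (1 - c ^ 2) * ‖h‖ ^ 2 :=
    aux_perp_norm H U U' c hU hU' hcomp
  have key1' : ∀ h : H, ‖Hᗮ.orthogonalProjection ((adjoint U) h)‖ ^ 2 = (1 - c ^ 2) * ‖h‖ ^ 2 :=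
    aux_perp_norm H (adjoint U) (adjoint U') c hUs hU's hadj
  -- key 2 : norm of H-part of U x for x ∈ Hᗮ
  have key2 : ∀ x : Hᗮ, ‖H.orthogonalProjection (U x)‖ ≤ s * ‖x‖ := by
    intro x
    set k : H := H.orthogonalProjection (U x) with hk
    set w : Hᗮ := Hᗮ.orthogonalProjection ((adjoint U) k) with hw
    have hwn : ‖w‖ = s * ‖k‖ := by
      have h1 := key1' k
      rw [← hw] at h1
      have : ‖w‖ = Real.sqrt (‖w‖ ^ 2) := (Real.sqrt_sq (norm_nonneg _)).symm
      rw [this, h1, show (1 - c ^ 2) * ‖k‖ ^ 2 = (s * ‖k‖) ^ 2 by rw [mul_pow, hs2],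
        Real.sqrt_sq (by positivity)]
    have e1 : (inner ℂ ((k : K)) ((k : K)) : ℂ) = inner ℂ (U (x : K)) ((k : K)) := by
      conv_rhs => rw [← orthogonalProjection_add_orthogonalProjection_orthogonal H (U ↑x)]
      rw [inner_add_left,
        Submodule.inner_left_of_mem_orthogonal k.2 (Hᗮ.orthogonalProjection (U (x : K))).2,
        add_zero, ← hk]
    have e2 : (inner ℂ (U (x : K)) ((k : K)) : ℂ) = inner ℂ ((x : K)) ((w : K)) := by
      rw [← adjoint_inner_right]
      conv_lhs => rw [show ((adjoint U) (k : K)) =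
        ((H.orthogonalProjection ((adjoint U) (k : K)) : H) : K) + ((w : Hᗮ) : K) from by
          rw [hw]; exact (orthogonalProjection_add_orthogonalProjection_orthogonal H _).symm]
      rw [inner_add_right,
        Submodule.inner_left_of_mem_orthogonal
          (H.orthogonalProjection ((adjoint U) (k : K))).2 x.2, zero_add]
    have hb1 : ‖k‖ * ‖k‖ ≤ ‖x‖ * (s * ‖k‖) := by
      have hre : ‖(k : K)‖ * ‖(k : K)‖ = RCLike.re (inner ℂ ((k : K)) ((k : K)) : ℂ) :=
        (inner_self_eq_norm_mul_norm _).symm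
      calc ‖k‖ * ‖k‖ = ‖(k : K)‖ * ‖(k : K)‖ := by rw [Submodule.norm_coe]
        _ = RCLike.re (inner ℂ ((k : K)) ((k : K)) : ℂ) := hre
        _ = RCLike.re (inner ℂ ((x : K)) ((w : K)) : ℂ) := by rw [e1, e2]
        _ ≤ ‖(inner ℂ ((x : K)) ((w : K)) : ℂ)‖ := RCLike.re_le_norm _
        _ ≤ ‖(x : K)‖ * ‖(w : K)‖ := norm_inner_le_norm _ _
        _ = ‖x‖ * (s * ‖k‖) := by rw [Submodule.norm_coe, Submodule.norm_coe, hwn]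
    rcases eq_or_lt_of_le (norm_nonneg k) with h0 | h0
    · rw [← h0]; positivity
    · nlinarith [norm_nonneg x]
  -- main bound
  apply opNorm_le_bound _ (by positivity)
  intro x
  set h : H := H.orthogonalProjection x with hh
  set b : Hᗮ := Hᗮ.orthogonalProjection x with hb
  set A : H := ((c : ℂ) - 1) • U' h + H.orthogonalProjection (U b) with hA
  set B : Hᗮ := Hᗮ.orthogonalProjection (U h) with hB
  have hxdec : x = (h : K) + (b : K) :=
    (orthogonalProjection_add_orthogonalProjection_orthogonal H x).symm
  have hDx : (U - (H.subtypeL ∘L U' ∘L H.orthogonalProjection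
        + Hᗮ.subtypeL ∘L (Hᗮ.orthogonalProjection ∘L U ∘L Hᗮ.subtypeL)
          ∘L Hᗮ.orthogonalProjection)) x = (A : K) + (B : K) := by
    have hUh : U (h : K) = (((c : ℂ) • U' h : H) : K) + ((B : Hᗮ) : K) := by
      rw [hcomp h, hB]
      exact (orthogonalProjection_add_orthogonalProjection_orthogonal H _).symm
    set e : Hᗮ := Hᗮ.orthogonalProjection (U (b : K)) with he
    have hUb : U (b : K) = ((H.orthogonalProjection (U b) : H) : K) + (e : K) := by
      rw [he]
      exact (orthogonalProjection_add_orthogonalProjection_orthogonal H _).symm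
    simp only [sub_apply, add_apply, comp_apply, Submodule.subtypeL_apply]
    rw [← hh, ← hb, ← he]
    conv_lhs => rw [hxdec]
    rw [map_add, hUh, hUb, hA]
    push_cast
    module
  have hnormA : ‖A‖ ≤ (1 - c) * ‖h‖ + s * ‖b‖ := by
    rw [hA]
    refine (norm_add_le _ _).trans ?_
    have h1 : ‖((c : ℂ) - 1) • U' h‖ = (1 - c) * ‖h‖ := by
      rw [norm_smul, U'.norm_map_of_mem_unitary hU']
      have h2 : ‖(c : ℂ) - 1‖ = 1 - c := by
        rw [show (c : ℂ) - 1 = ((c - 1 : ℝ) : ℂ) by push_cast; ring, Complex.norm_real,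
          Real.norm_eq_abs, abs_of_nonpos (by linarith)]
        ring
      rw [h2]
    rw [h1]
    exact add_le_add_right (key2 b) _
  have hnormB : ‖B‖ ^ 2 = (1 - c ^ 2) * ‖h‖ ^ 2 := key1 h
  have hDxn : ‖(A : K) + (B : K)‖ ^ 2 = ‖A‖ ^ 2 + ‖B‖ ^ 2 := by
    simp only [sq]
    rw [norm_add_sq_eq_norm_sq_add_norm_sq_of_inner_eq_zero _ _
      (Submodule.inner_right_of_mem_orthogonal A.2 B.2), Submodule.norm_coe, Submodule.norm_coe]
  have hxn : ‖x‖ ^ 2 = ‖h‖ ^ 2 + ‖b‖ ^ 2 := by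
    conv_lhs => rw [hxdec]
    simp only [sq]
    rw [norm_add_sq_eq_norm_sq_add_norm_sq_of_inner_eq_zero _ _
      (Submodule.inner_right_of_mem_orthogonal h.2 b.2), Submodule.norm_coe, Submodule.norm_coe]
  rw [hDx]
  have hsq : ‖(A : K) + (B : K)‖ ^ 2 ≤ (2 * s * ‖x‖) ^ 2 := by
    rw [hDxn]
    have step1 : ‖A‖ ≤ s * ‖h‖ + s * ‖b‖ :=
      hnormA.trans (add_le_add_left (mul_le_mul_of_nonneg_right hcs (norm_nonneg h)) _)
    have step2 : ‖A‖ ^ 2 ≤ (s * ‖h‖ + s * ‖b‖) ^ 2 := by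
      have := norm_nonneg A
      nlinarith [mul_nonneg hs0 (norm_nonneg (h : H)), mul_nonneg hs0 (norm_nonneg (b : Hᗮ))]
    nlinarith [step2, hnormB, hxn, hs2,
      mul_nonneg (sq_nonneg s) (sq_nonneg (‖h‖ - ‖b‖)),
      mul_nonneg (sq_nonneg s) (sq_nonneg ‖h‖),
      mul_nonneg (sq_nonneg s) (sq_nonneg ‖b‖)]
  calc ‖(A : K) + (B : K)‖ = Real.sqrt (‖(A : K) + (B : K)‖ ^ 2) :=
        (Real.sqrt_sq (norm_nonneg _)).symm
    _ ≤ Real.sqrt ((2 * s * ‖x‖) ^ 2) := Real.sqrt_le_sqrt hsq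
    _ = 2 * s * ‖x‖ := Real.sqrt_sq (by positivity)
end

section
/- Let a and b be bounded selfadjoint operators on a Hilbert space. Then the spectrum of b is contained in σ(a) + ‖b − a‖·[−1,1], i.e., every point of σ(b) is within distance ‖b−a‖ of σ(a). Consequently, the Hausdorff distance between σ(a) and σ(b) is at most ‖a − b‖. -/
open Metric in
/-- Key lemma: every point of the real spectrum of `b` is within `‖b - a‖` of the
real spectrum of `a`, for selfadjoint operators on a Hilbert space. -/
lemma key_aux {H : Type*} [NormedAddCommGroup H] [InnerProductSpace ℂ H] [CompleteSpace H]
    (a b : H →L[ℂ] H) (ha : IsSelfAdjoint a) (x : ℝ) (hx : x ∈ spectrum ℝ b) :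
    ∃ w ∈ spectrum ℝ a, |x - w| ≤ ‖b - a‖ := by
  have hnt : Nontrivial (H →L[ℂ] H) := by
    by_contra h
    have : Subsingleton (H →L[ℂ] H) := not_nontrivial_iff_subsingleton.mp h
    have : spectrum ℝ b = ∅ := by
      have := spectrum.resolventSet_of_subsingleton (R := ℝ) b
      rw [spectrum, this, Set.compl_univ]
    simp [this] at hx
  -- the real spectrum of `a` is nonempty and compact
  have hne : (spectrum ℝ a).Nonempty := by
    obtain ⟨z, hz⟩ := spectrum.nonempty a
    refine ⟨z.re, ?_⟩
    rw [← spectrum.algebraMap_mem_iff (S := ℂ)]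
    rwa [Complex.coe_algebraMap, ← ha.mem_spectrum_eq_re hz]
  have hcpt : IsCompact (spectrum ℝ a) := spectrum.isCompact a
  obtain ⟨w, hw, hwd⟩ := hcpt.exists_infDist_eq_dist hne x
  refine ⟨w, hw, ?_⟩
  rw [Real.dist_eq] at hwd
  rw [← hwd]
  -- suppose for contradiction that the inf distance exceeds `‖b - a‖`
  by_contra hlt
  push_neg at hlt
  set d := infDist x (spectrum ℝ a) with hd
  have hd0 : 0 < d := lt_of_le_of_lt (norm_nonneg _) hlt
  have hdist : ∀ t ∈ spectrum ℝ a, d ≤ |t - x| := by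
    intro t ht
    have := infDist_le_dist_of_mem (x := x) ht
    rwa [Real.dist_eq, abs_sub_comm] at this
  have hne0 : ∀ t ∈ spectrum ℝ a, t - x ≠ 0 := fun t ht h0 => by
    have := hdist t ht
    rw [h0, abs_zero] at this
    exact absurd this (not_le.mpr hd0)
  -- the resolvent via continuous functional calculus
  set f : ℝ → ℝ := fun t => (t - x)⁻¹ with hf
  have hfc : ContinuousOn f (spectrum ℝ a) :=
    ((continuous_id.sub continuous_const).continuousOn).inv₀ hne0
  have hgc : ContinuousOn (fun t : ℝ => t - x) (spectrum ℝ a) :=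
    (continuous_id.sub continuous_const).continuousOn
  set c : H →L[ℂ] H := cfc f a with hc
  have hga : cfc (fun t : ℝ => t - x) a = a - algebraMap ℝ (H →L[ℂ] H) x := by
    rw [cfc_sub (fun t : ℝ => t) (fun _ : ℝ => x) a (continuous_id.continuousOn) (continuousOn_const), cfc_id' ℝ a, cfc_const x a]
  have hmul : c * (a - algebraMap ℝ (H →L[ℂ] H) x) = 1 := by
    rw [← hga, hc, ← cfc_mul f _ a hfc hgc]
    calc cfc (fun t : ℝ => f t * (t - x)) a = cfc (fun _ : ℝ => (1 : ℝ)) a := by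
          apply cfc_congr
          intro t ht
          exact inv_mul_cancel₀ (hne0 t ht)
      _ = 1 := cfc_const_one ℝ a
  have hmul' : (a - algebraMap ℝ (H →L[ℂ] H) x) * c = 1 := by
    rw [← hga, hc, ← cfc_mul _ f a hgc hfc]
    calc cfc (fun t : ℝ => (t - x) * f t) a = cfc (fun _ : ℝ => (1 : ℝ)) a := by
          apply cfc_congr
          intro t ht
          exact mul_inv_cancel₀ (hne0 t ht)
      _ = 1 := cfc_const_one ℝ a
  have hu : IsUnit (a - algebraMap ℝ (H →L[ℂ] H) x) :=
    ⟨⟨a - algebraMap ℝ (H →L[ℂ] H) x, c, hmul', hmul⟩, rfl⟩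
  -- norm bound on the resolvent
  have hcnorm : ‖c‖ ≤ d⁻¹ := by
    apply norm_cfc_le (by positivity)
    intro t ht
    rw [Real.norm_eq_abs, hf, abs_inv]
    exact inv_anti₀ hd0 (hdist t ht)
  -- the perturbation is invertible
  have hsmall : ‖-(c * (b - a))‖ < 1 := by
    rw [norm_neg]
    calc ‖c * (b - a)‖ ≤ ‖c‖ * ‖b - a‖ := norm_mul_le _ _
      _ ≤ d⁻¹ * ‖b - a‖ := by gcongr
      _ < d⁻¹ * d := mul_lt_mul_of_pos_left hlt (inv_pos.mpr hd0)
      _ = 1 := inv_mul_cancel₀ (ne_of_gt hd0)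
  have hunit : IsUnit (1 + c * (b - a)) := by
    have := (Units.oneSub (-(c * (b - a))) hsmall).isUnit
    rwa [Units.val_oneSub, sub_neg_eq_add] at this
  have hb_unit : IsUnit (b - algebraMap ℝ (H →L[ℂ] H) x) := by
    have heq : (a - algebraMap ℝ (H →L[ℂ] H) x) * (1 + c * (b - a)) = b - algebraMap ℝ (H →L[ℂ] H) x := by
      rw [mul_add, mul_one, ← mul_assoc, hmul', one_mul]
      abel
    rw [← heq]
    exact hu.mul hunit
  have : x ∉ spectrum ℝ b := by
    rw [spectrum.notMem_iff]
    have := hb_unit.neg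
    rwa [neg_sub] at this
  exact this hx

/-- Complex version of the key lemma. -/
lemma key_aux2 {H : Type*} [NormedAddCommGroup H] [InnerProductSpace ℂ H] [CompleteSpace H]
    (a b : H →L[ℂ] H) (ha : IsSelfAdjoint a) (hb : IsSelfAdjoint b) (z : ℂ)
    (hz : z ∈ spectrum ℂ b) : ∃ w ∈ spectrum ℂ a, dist z w ≤ ‖b - a‖ := by
  have hzre : z = (z.re : ℂ) := hb.mem_spectrum_eq_re hz
  have hx : (z.re : ℝ) ∈ spectrum ℝ b := by
    rw [← spectrum.algebraMap_mem_iff (S := ℂ), Complex.coe_algebraMap, ← hzre]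
    exact hz
  obtain ⟨w, hw, hwd⟩ := key_aux a b ha z.re hx
  refine ⟨(w : ℂ), ?_, ?_⟩
  · rw [← Complex.coe_algebraMap]
    exact spectrum.algebraMap_mem ℂ hw
  · rw [hzre, Complex.dist_of_im_eq (by simp)]
    simpa [Real.dist_eq] using hwd

/-- For bounded selfadjoint operators `a`, `b` on a Hilbert space, `σ(b) ⊆ σ(a) + ‖b−a‖·[−1,1]`,
and consequently the Hausdorff distance between `σ(a)` and `σ(b)` is at most `‖a − b‖`. -/
theorem stmt_5 {H : Type*} [NormedAddCommGroup H] [InnerProductSpace ℂ H] [CompleteSpace H]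
    (a b : H →L[ℂ] H) (ha : IsSelfAdjoint a) (hb : IsSelfAdjoint b) :
    (∀ z ∈ spectrum ℂ b, ∃ w ∈ spectrum ℂ a, ∃ t ∈ Set.Icc (-1 : ℝ) 1,
      z = w + ((‖b - a‖ * t : ℝ) : ℂ)) ∧
    EMetric.hausdorffEdist (spectrum ℂ a) (spectrum ℂ b) ≤ ENNReal.ofReal ‖a - b‖ := by
  constructor
  · intro z hz
    have hzre : z = (z.re : ℂ) := hb.mem_spectrum_eq_re hz
    have hx : (z.re : ℝ) ∈ spectrum ℝ b := by
      rw [← spectrum.algebraMap_mem_iff (S := ℂ), Complex.coe_algebraMap, ← hzre]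
      exact hz
    obtain ⟨w, hw, hwd⟩ := key_aux a b ha z.re hx
    refine ⟨(w : ℂ), ?_, ?_⟩
    · rw [← Complex.coe_algebraMap]
      exact spectrum.algebraMap_mem ℂ hw
    · by_cases h0 : ‖b - a‖ = 0
      · refine ⟨0, by norm_num, ?_⟩
        have hzw : z.re = w := by
          rw [h0] at hwd
          have := le_antisymm hwd (abs_nonneg _)
          have := sub_eq_zero.mp (abs_eq_zero.mp this)
          linarith
        rw [hzre, hzw]
        simp
      · have hbpos : (0:ℝ) < ‖b - a‖ := lt_of_le_of_ne (norm_nonneg _) (Ne.symm h0)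
        refine ⟨(z.re - w) / ‖b - a‖, ?_, ?_⟩
        · have habs : |(z.re - w) / ‖b - a‖| ≤ 1 := by
            rw [abs_div, abs_of_pos hbpos]
            exact (div_le_one hbpos).mpr hwd
          exact abs_le.mp habs
        · rw [mul_div_cancel₀ _ h0, hzre]
          push_cast
          ring_nf
          simp
  · apply EMetric.hausdorffEdist_le_of_mem_edist
    · intro z hz
      obtain ⟨w, hw, hwd⟩ := key_aux2 b a hb ha z hz
      refine ⟨w, hw, ?_⟩
      rw [edist_dist]
      exact ENNReal.ofReal_le_ofReal hwd
    · intro z hz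
      obtain ⟨w, hw, hwd⟩ := key_aux2 a b ha hb z hz
      refine ⟨w, hw, ?_⟩
      rw [edist_dist]
      exact ENNReal.ofReal_le_ofReal (by rwa [norm_sub_rev a b])
end

section
/- Let M and N be commuting normal contractions on a Hilbert space H. Define operators on H ⊕ H by U' = [[M, (1 − MM*)^{1/2}],[(1 − M*M)^{1/2}, −M*]] and V' = [[N, 0],[0, N]]. Then U' is unitary, U' and V' commute, V' is a normal contraction, and the compression of (U', V') to the first copy of H equals (M, N). -/
open ContinuousLinearMap

/-- The block operator `[[a, b],[c, d]]` on the Hilbert space `H ⊕ H`. -/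
noncomputable def blockOp {H : Type*} [NormedAddCommGroup H] [InnerProductSpace ℂ H]
    (a b c d : H →L[ℂ] H) : WithLp 2 (H × H) →L[ℂ] WithLp 2 (H × H) :=
  ((WithLp.prodContinuousLinearEquiv 2 ℂ H H).symm : (H × H) →L[ℂ] WithLp 2 (H × H)) ∘L
    ((a ∘L fst ℂ H H + b ∘L snd ℂ H H).prod (c ∘L fst ℂ H H + d ∘L snd ℂ H H)) ∘L
    ((WithLp.prodContinuousLinearEquiv 2 ℂ H H) : WithLp 2 (H × H) →L[ℂ] (H × H))

section Aux

open NormedSpace Bornology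

/-- Fuglede's theorem in a C*-algebra: if `m` is normal and commutes with `n`, then so does
`star m`. -/
lemma aux_fuglede {A : Type*} [CStarAlgebra A] {m n : A}
    (hm : IsStarNormal m) (h : Commute m n) : Commute (star m) n := by
  let +nondep : NormedAlgebra ℚ A := .restrictScalars ℚ ℂ A
  rcases subsingleton_or_nontrivial A with hA | hA
  · exact Subsingleton.elim _ _
  set a := star m with ha
  have hcomm : Commute (star m) m := hm.star_comm_self
  have key : ∀ z : ℂ, exp (z • a) * n = n * exp (z • a) := by
    have hinv : ∀ z : ℂ, exp (z • -a) * exp (z • a) = 1 := by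
      intro z
      rw [← exp_add_of_commute (((Commute.refl a).neg_left.smul_left z).smul_right z)]
      simp
    have hdiff : Differentiable ℂ (fun z : ℂ => exp (z • a) * n * exp (z • -a)) := by
      have h1 : Differentiable ℂ (fun z : ℂ => exp (z • a)) :=
        fun z => (hasDerivAt_exp_smul_const a z).differentiableAt
      have h2 : Differentiable ℂ (fun z : ℂ => exp (z • -a)) :=
        fun z => (hasDerivAt_exp_smul_const (-a) z).differentiableAt
      exact (h1.mul_const n).mul h2
    have hbdd : ∀ z : ℂ, ‖exp (z • a) * n * exp (z • -a)‖ ≤ ‖n‖ := by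
      intro z
      set b := (starRingEnd ℂ z) • m with hb
      set c := z • a - b with hc
      have hsc : star c = -c := by
        rw [hc, star_sub, neg_sub]
        congr 1 <;> simp [ha, hb, star_smul]
      have hcab : Commute (z • a) b := (hcomm.smul_left z).smul_right _
      have hccb : Commute c b := (hcab.sub_left (Commute.refl b))
      have hnb : Commute (exp b) n := ((h.smul_left _).exp_left).symm.symm
      have h1 : exp (z • a) = exp c * exp b := by
        rw [← exp_add_of_commute hccb]
        congr 1
        rw [hc]; abel
      have h2 : exp (z • -a) = exp (-b) * exp (-c) := by
        rw [← exp_add_of_commute (hccb.neg_right.neg_left).symm]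
        congr 1
        rw [hc]; module
      have hbb : exp b * exp (-b) = 1 := by
        rw [← exp_add_of_commute ((Commute.refl b).neg_right)]; simp
      have hcc : exp c * exp (-c) = 1 := by
        rw [← exp_add_of_commute ((Commute.refl c).neg_right)]; simp
      have hrw : exp (z • a) * n * exp (z • -a) = exp c * n * exp (-c) := by
        rw [h1, h2]
        calc exp c * exp b * n * (exp (-b) * exp (-c))
            = exp c * (n * exp b) * (exp (-b) * exp (-c)) := by
              rw [mul_assoc (exp c), hnb.eq]
          _ = exp c * n * (exp b * exp (-b)) * exp (-c) := by
              simp only [mul_assoc]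
          _ = exp c * n * exp (-c) := by rw [hbb, mul_one]
      rw [hrw]
      have hnorm : ‖exp c‖ = 1 := by
        have h2 : ‖exp c‖ * ‖exp c‖ = 1 := by
          have := CStarRing.norm_self_mul_star (x := exp c)
          rw [star_exp, hsc] at this
          rw [← this, hcc, norm_one]
        nlinarith [norm_nonneg (exp c)]
      have hnorm' : ‖exp (-c)‖ = 1 := by
        rw [← hsc, ← star_exp, norm_star, hnorm]
      calc ‖exp c * n * exp (-c)‖ ≤ ‖exp c * n‖ * ‖exp (-c)‖ := norm_mul_le _ _
        _ ≤ ‖exp c‖ * ‖n‖ * ‖exp (-c)‖ :=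
            mul_le_mul_of_nonneg_right (norm_mul_le _ _) (norm_nonneg _)
        _ = ‖n‖ := by rw [hnorm, hnorm', one_mul, mul_one]
    have hconst : ∀ z : ℂ, exp (z • a) * n * exp (z • -a) = n := by
      intro z
      have := hdiff.apply_eq_apply_of_bounded ?_ z 0
      · simpa using this
      · rw [isBounded_iff_forall_norm_le]
        exact ⟨‖n‖, by rintro x ⟨z, rfl⟩; exact hbdd z⟩
    intro z
    calc exp (z • a) * n
        = exp (z • a) * n * (exp (z • -a) * exp (z • a)) := by rw [hinv, mul_one]
      _ = (exp (z • a) * n * exp (z • -a)) * exp (z • a) := by simp only [mul_assoc]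
      _ = n * exp (z • a) := by rw [hconst]
  have h1 : HasDerivAt (fun z : ℂ => exp (z • a) * n) (a * n) 0 := by
    simpa using (hasDerivAt_exp_smul_const' (𝕂 := ℂ) a 0).mul_const n
  have h2 : HasDerivAt (fun z : ℂ => exp (z • a) * n) (n * a) 0 := by
    have := ((hasDerivAt_exp_smul_const' (𝕂 := ℂ) a 0).const_mul n)
    simp only [zero_smul, exp_zero, mul_one] at this
    have heq : (fun z : ℂ => n * exp (z • a)) = (fun z : ℂ => exp (z • a) * n) := by
      funext z; rw [key z]
    rwa [heq] at this
  exact h1.unique h2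

lemma aux_commute_of_mem_elemental {A : Type*} [CStarAlgebra A] {a y : A} (b : A)
    (hy : y ∈ StarAlgebra.elemental ℂ a) (h1 : Commute b a) (h2 : Commute b (star a)) :
    Commute b y := by
  induction hy using StarAlgebra.elemental.induction_on with
  | self => exact h1
  | star_self => exact h2
  | algebraMap r => exact (Algebra.commutes r b).symm
  | add u hu v hv pu pv => exact pu.add_right pv
  | mul u hu v hv pu pv => exact pu.mul_right pv
  | closure s hs hsp v hv =>
      have hcl : IsClosed {x : A | Commute b x} := by
        have : {x : A | Commute b x} = {x : A | b * x = x * b} := rfl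
        rw [this]
        exact isClosed_eq (by fun_prop) (by fun_prop)
      exact closure_minimal (fun u hu => hsp u hu) hcl hv

lemma aux_cfc_mem_elemental {A : Type*} [CStarAlgebra A] (f : ℂ → ℂ) (a : A) :
    cfc f a ∈ StarAlgebra.elemental ℂ a := by
  refine cfc_cases (· ∈ StarAlgebra.elemental ℂ a) a f (zero_mem _) fun hf ha => ?_
  rw [cfcHom_eq_of_isStarNormal]
  exact Subtype.coe_prop _

open scoped NNReal in
/-- An element commuting with a square of a nonnegative element commutes with that element. -/
lemma aux_commute_sqrt {A : Type*} [CStarAlgebra A] [PartialOrder A] [StarOrderedRing A]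
    [NonnegSpectrumClass ℝ A]
    {s : A} (b : A) (hs : 0 ≤ s) (hb : Commute b (s * s)) : Commute b s := by
  have hsa : IsSelfAdjoint s := IsSelfAdjoint.of_nonneg hs
  have hss : 0 ≤ s * s := hsa.mul_self_nonneg
  have key : s = cfc (fun z : ℂ => (((NNReal.sqrt z.re.toNNReal : ℝ≥0) : ℝ) : ℂ)) (s * s) := by
    conv_lhs => rw [← CFC.sqrt_mul_self s hs]
    rw [CFC.sqrt_eq_cfc, cfc_nnreal_eq_real _ _ hss,
      cfc_real_eq_complex _ (IsSelfAdjoint.of_nonneg hss)]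
  rw [key]
  exact aux_commute_of_mem_elemental b (aux_cfc_mem_elemental _ _) hb
    (by rwa [(IsSelfAdjoint.of_nonneg hss).star_eq])

variable {H : Type*} [NormedAddCommGroup H] [InnerProductSpace ℂ H]

local notation "e" => WithLp.prodContinuousLinearEquiv 2 ℂ H H

lemma blockOp_apply (a b c d : H →L[ℂ] H) (v : WithLp 2 (H × H)) :
    blockOp a b c d v = (e).symm (a (e v).1 + b (e v).2, c (e v).1 + d (e v).2) := by
  rfl

lemma blockOp_apply' (a b c d : H →L[ℂ] H) (v : WithLp 2 (H × H)) :
    e (blockOp a b c d v) = (a (e v).1 + b (e v).2, c (e v).1 + d (e v).2) := by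
  rw [blockOp_apply]; exact (e).apply_symm_apply _

lemma blockOp_mul (a b c d a' b' c' d' : H →L[ℂ] H) :
    blockOp a b c d * blockOp a' b' c' d'
      = blockOp (a * a' + b * c') (a * b' + b * d') (c * a' + d * c') (c * b' + d * d') := by
  ext v
  apply (e).injective
  simp only [mul_apply, blockOp_apply', add_apply, mul_def, comp_apply, map_add, Prod.mk_add_mk,
    Prod.mk.injEq]
  constructor <;> abel

lemma blockOp_one : blockOp (1 : H →L[ℂ] H) 0 0 1 = 1 := by
  ext v
  apply (e).injective
  rw [blockOp_apply']; simp [WithLp.equiv]; rfl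

variable [CompleteSpace H]

open scoped InnerProductSpace in
lemma blockOp_adjoint (a b c d : H →L[ℂ] H) :
    adjoint (blockOp a b c d) = blockOp (adjoint a) (adjoint c) (adjoint b) (adjoint d) := by
  symm
  rw [eq_adjoint_iff]
  intro x y
  simp only [blockOp_apply]
  rw [WithLp.prod_inner_apply, WithLp.prod_inner_apply]
  simp only [WithLp.prodContinuousLinearEquiv_symm_apply, WithLp.toLp_fst,
    WithLp.toLp_snd, WithLp.prodContinuousLinearEquiv_apply, WithLp.ofLp_fst,
    WithLp.ofLp_snd]
  simp only [inner_add_left, inner_add_right, adjoint_inner_left]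
  ring

open scoped InnerProductSpace in
lemma blockOp_diag_isPositive {s t : H →L[ℂ] H} (hs : s.IsPositive) (ht : t.IsPositive) :
    (blockOp s 0 0 t).IsPositive := by
  rw [isPositive_def']
  constructor
  · rw [IsSelfAdjoint, star_eq_adjoint, blockOp_adjoint]
    simp only [map_zero]
    rw [hs.isSelfAdjoint.adjoint_eq, ht.isSelfAdjoint.adjoint_eq]
  · intro v
    rw [reApplyInnerSelf_apply, blockOp_apply]
    rw [show (inner ℂ ((e).symm ((s (e v).1 + (0:H→L[ℂ]H) (e v).2),
        ((0:H→L[ℂ]H) (e v).1 + t (e v).2))) v : ℂ) = _ from WithLp.prod_inner_apply _ _]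
    simp only [zero_apply, add_zero, zero_add, WithLp.prodContinuousLinearEquiv_symm_apply,
      WithLp.toLp_fst, WithLp.toLp_snd, map_add]
    have h1 := hs.inner_nonneg_left (e v).1
    have h2 := ht.inner_nonneg_left (e v).2
    have hfst : (WithLp.ofLp v).1 = (e v).1 := rfl
    have hsnd : (WithLp.ofLp v).2 = (e v).2 := rfl
    rw [hfst, hsnd]
    exact add_nonneg (RCLike.nonneg_iff.mp h1).1 (RCLike.nonneg_iff.mp h2).1

lemma blockOp_diag_norm_le (n : H →L[ℂ] H) : ‖blockOp n 0 0 n‖ ≤ ‖n‖ := by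
  refine opNorm_le_bound _ (norm_nonneg n) fun v => ?_
  have hv : ‖v‖ ^ 2 = ‖(e v).1‖ ^ 2 + ‖(e v).2‖ ^ 2 := WithLp.prod_norm_sq_eq_of_L2 v
  have hval : ‖blockOp n 0 0 n v‖ ^ 2 = ‖n (e v).1‖ ^ 2 + ‖n (e v).2‖ ^ 2 := by
    rw [blockOp_apply]
    simp only [zero_apply, add_zero, zero_add]
    exact WithLp.prod_norm_sq_eq_of_L2 _
  have hsq : ‖blockOp n 0 0 n v‖ ^ 2 ≤ (‖n‖ * ‖v‖) ^ 2 := by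
    rw [hval, mul_pow, hv, mul_add]
    gcongr
    · calc ‖n (e v).1‖ ^ 2 ≤ (‖n‖ * ‖(e v).1‖) ^ 2 := by gcongr; exact le_opNorm n _
        _ = ‖n‖ ^ 2 * ‖(e v).1‖ ^ 2 := by ring
    · calc ‖n (e v).2‖ ^ 2 ≤ (‖n‖ * ‖(e v).2‖) ^ 2 := by gcongr; exact le_opNorm n _
        _ = ‖n‖ ^ 2 * ‖(e v).2‖ ^ 2 := by ring
  have hnn : (0:ℝ) ≤ ‖n‖ * ‖v‖ := by positivity
  nlinarith [norm_nonneg (blockOp n 0 0 n v)]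

omit [CompleteSpace H] in
lemma blockOp_topright_inj {x y : H →L[ℂ] H}
    (hxy : blockOp 0 x 0 0 = blockOp 0 y 0 0) : x = y := by
  ext u
  have := congrArg (fun f : WithLp 2 (H × H) →L[ℂ] WithLp 2 (H × H) =>
    ((e) (f ((e).symm (0, u)))).1) hxy
  beta_reduce at this
  rw [blockOp_apply', blockOp_apply'] at this
  simpa using this

end Aux

/-- Let `M`, `N` be commuting normal contractions on `H` and let `S = (1 − MM*)^{1/2}`,
`T = (1 − M*M)^{1/2}` be the positive square roots. With `U' = [[M, S],[T, −M*]]` and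
`V' = [[N, 0],[0, N]]` on `H ⊕ H`: `U'` is unitary, `U'` and `V'` commute, `V'` is a normal
contraction, and the compression of `(U', V')` to the first copy of `H` is `(M, N)`. -/
theorem stmt_8 {H : Type*} [NormedAddCommGroup H] [InnerProductSpace ℂ H] [CompleteSpace H]
    (M N S T : H →L[ℂ] H)
    (hM : IsStarNormal M) (hN : IsStarNormal N) (hMN : M * N = N * M)
    (hMc : ‖M‖ ≤ 1) (hNc : ‖N‖ ≤ 1)
    (hS : S.IsPositive) (hSsq : S * S = 1 - M * adjoint M)
    (hT : T.IsPositive) (hTsq : T * T = 1 - adjoint M * M) :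
    blockOp M S T (-adjoint M) ∈ unitary (WithLp 2 (H × H) →L[ℂ] WithLp 2 (H × H)) ∧
    blockOp M S T (-adjoint M) * blockOp N 0 0 N
      = blockOp N 0 0 N * blockOp M S T (-adjoint M) ∧
    IsStarNormal (blockOp N 0 0 N) ∧ ‖blockOp N 0 0 N‖ ≤ 1 ∧
    (∀ x : H, ((WithLp.prodContinuousLinearEquiv 2 ℂ H H)
        (blockOp M S T (-adjoint M)
          ((WithLp.prodContinuousLinearEquiv 2 ℂ H H).symm (x, 0)))).1 = M x) ∧
    (∀ x : H, ((WithLp.prodContinuousLinearEquiv 2 ℂ H H)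
        (blockOp N 0 0 N
          ((WithLp.prodContinuousLinearEquiv 2 ℂ H H).symm (x, 0)))).1 = N x) := by
  have hstarM : star M = adjoint M := star_eq_adjoint M
  have hstarN : star N = adjoint N := star_eq_adjoint N
  -- Fuglede: adjoint M commutes with N
  have hfug : Commute (adjoint M) N := by
    rw [← hstarM]
    exact aux_fuglede hM hMN
  -- N commutes with S and T
  have hNS : Commute N S := by
    refine aux_commute_sqrt N ((nonneg_iff_isPositive S).mpr hS) ?_
    rw [hSsq]
    have hNM : Commute N M := hMN.symm
    exact (Commute.one_right N).sub_right (hNM.mul_right hfug.symm)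
  have hNT : Commute N T := by
    refine aux_commute_sqrt N ((nonneg_iff_isPositive T).mpr hT) ?_
    rw [hTsq]
    have hNM : Commute N M := hMN.symm
    exact (Commute.one_right N).sub_right (hfug.symm.mul_right hNM)
  -- intertwining: S * M = M * T
  have hint : S * M = M * T := by
    have hD : (blockOp S 0 0 T).IsPositive := blockOp_diag_isPositive hS hT
    have hDD : blockOp S 0 0 T * blockOp S 0 0 T = blockOp (S * S) 0 0 (T * T) := by
      rw [blockOp_mul]; simp
    have hcomm : Commute (blockOp 0 M 0 0) (blockOp S 0 0 T * blockOp S 0 0 T) := by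
      rw [hDD]
      show _ = _
      rw [blockOp_mul, blockOp_mul]
      simp only [zero_mul, mul_zero, add_zero, zero_add]
      congr 1
      rw [hSsq, hTsq]
      noncomm_ring
    have := aux_commute_sqrt (blockOp 0 M 0 0)
      ((nonneg_iff_isPositive (blockOp S 0 0 T)).mpr hD) hcomm
    have hBD : blockOp 0 M 0 0 * blockOp S 0 0 T = blockOp 0 (M * T) 0 0 := by
      rw [blockOp_mul]; simp
    have hDB : blockOp S 0 0 T * blockOp 0 M 0 0 = blockOp 0 (S * M) 0 0 := by
      rw [blockOp_mul]; simp
    have h := this.eq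
    rw [hBD, hDB] at h
    exact (blockOp_topright_inj h).symm
  have hint' : adjoint M * S = T * adjoint M := by
    have h := congrArg star hint
    rw [star_mul, star_mul, hS.isSelfAdjoint.star_eq, hT.isSelfAdjoint.star_eq, hstarM] at h
    exact h
  have hUstar : star (blockOp M S T (-adjoint M)) = blockOp (adjoint M) T S (-M) := by
    rw [star_eq_adjoint, blockOp_adjoint, hS.isSelfAdjoint.adjoint_eq,
      hT.isSelfAdjoint.adjoint_eq]
    congr 1
    rw [← star_eq_adjoint, star_neg, ← hstarM, star_star]
  refine ⟨?_, ?_, ?_, (blockOp_diag_norm_le N).trans hNc, ?_, ?_⟩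
  · rw [Unitary.mem_iff]
    have e1 : adjoint M * M + T * T = 1 := by rw [hTsq]; noncomm_ring
    have e2 : adjoint M * S + T * -adjoint M = 0 := by rw [hint']; noncomm_ring
    have e3 : S * M + -M * T = 0 := by rw [hint]; noncomm_ring
    have e4 : S * S + -M * -adjoint M = 1 := by rw [hSsq]; noncomm_ring
    have f1 : M * adjoint M + S * S = 1 := by rw [hSsq]; noncomm_ring
    have f2 : M * T + S * -M = 0 := by rw [← hint]; noncomm_ring
    have f3 : T * adjoint M + -adjoint M * S = 0 := by rw [← hint']; noncomm_ring
    have f4 : T * T + -adjoint M * -M = 1 := by rw [hTsq]; noncomm_ring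
    constructor
    · rw [hUstar, blockOp_mul, e1, e2, e3, e4, blockOp_one]
    · rw [hUstar, blockOp_mul, f1, f2, f3, f4, blockOp_one]
  · rw [blockOp_mul, blockOp_mul]
    simp only [mul_zero, zero_mul, add_zero, zero_add]
    rw [hMN, hNS.eq, hNT.eq]
    congr 1
    rw [neg_mul, mul_neg, hfug.eq]
  · constructor
    have hVstar : star (blockOp N 0 0 N) = blockOp (adjoint N) 0 0 (adjoint N) := by
      rw [star_eq_adjoint, blockOp_adjoint]
      simp only [map_zero]
    have hNN : adjoint N * N = N * adjoint N := by
      have := hN.star_comm_self.eq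
      rwa [hstarN] at this
    rw [hVstar]
    show _ = _
    rw [blockOp_mul, blockOp_mul]
    simp only [mul_zero, zero_mul, add_zero, zero_add]
    rw [hNN]
  · intro x
    rw [blockOp_apply']
    simp
  · intro x
    rw [blockOp_apply']
    simp
end

section
/- For θ = 2π/3, with q = e^{iθ}, X = diag(1, q, q²) and Y the 3×3 cyclic shift matrix, one has ‖X + X* + Y + Y*‖ = 1 + √3. Equivalently, the 3×3 real symmetric matrix [[2,1,1],[1,−1,1],[1,1,−1]] has operator norm 1 + √3. -/
open Matrix Real

lemma quad_ineq (a b c : ℝ) :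
    (2*a+b+c)^2+(a-b+c)^2+(a+b-c)^2 ≤ (4+2*Real.sqrt 3)*(a^2+b^2+c^2) := by
  have h3 : Real.sqrt 3 ^ 2 = 3 := Real.sq_sqrt (by norm_num)
  have h0 : (0:ℝ) ≤ Real.sqrt 3 := Real.sqrt_nonneg 3
  set s := Real.sqrt 3 with hs
  have h1 : 0 ≤ (s+1)*((b+c)-(s-1)*a)^2 := by positivity
  have h2 : 0 ≤ s*(b-c)^2 := by positivity
  have hD : (4+2*s)*(a^2+b^2+c^2) - ((2*a+b+c)^2+(a-b+c)^2+(a+b-c)^2)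
      = (s+1)*((b+c)-(s-1)*a)^2 + s*(b-c)^2 := by
    linear_combination (-((s-1)*a^2 - 2*a*b - 2*a*c)) * h3
  linarith

lemma quad_ineq_C (a b c : ℂ) :
    ‖2*a+b+c‖^2+‖a-b+c‖^2+‖a+b-c‖^2 ≤ (4+2*Real.sqrt 3)*(‖a‖^2+‖b‖^2+‖c‖^2) := by
  have e : ∀ z : ℂ, ‖z‖^2 = z.re^2 + z.im^2 := fun z => by
    rw [Complex.sq_norm, Complex.normSq_apply]; ring
  simp only [e, Complex.add_re, Complex.add_im, Complex.sub_re, Complex.sub_im,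
    Complex.mul_re, Complex.mul_im]
  have h1 := quad_ineq a.re b.re c.re
  have h2 := quad_ineq a.im b.im c.im
  norm_num
  nlinarith [h1, h2]

lemma qval_exp : Complex.exp (2 * Real.pi * Complex.I / 3)
    = (-1/2 : ℂ) + ((Real.sqrt 3 : ℝ) : ℂ)/2 * Complex.I := by
  have h : (2 * (Real.pi:ℂ) * Complex.I / 3) = ((2*Real.pi/3 : ℝ) : ℂ) * Complex.I := by
    push_cast; ring
  rw [h, Complex.exp_mul_I]
  have hc : Real.cos (2*Real.pi/3) = -(1/2) := by
    rw [show 2*Real.pi/3 = Real.pi - Real.pi/3 by ring, Real.cos_pi_sub, Real.cos_pi_div_three]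
  have hs : Real.sin (2*Real.pi/3) = Real.sqrt 3 / 2 := by
    rw [show 2*Real.pi/3 = Real.pi - Real.pi/3 by ring, Real.sin_pi_sub, Real.sin_pi_div_three]
  rw [← Complex.ofReal_cos, ← Complex.ofReal_sin, hc, hs]
  push_cast
  ring

lemma mat_eq_aux (X Y : Matrix (Fin 3) (Fin 3) ℂ)
    (hX : X = Matrix.diagonal (fun j : Fin 3 =>
      Complex.exp (2 * Real.pi * Complex.I / 3) ^ (j : ℕ)))
    (hY : Y = Matrix.of fun i j : Fin 3 => if j = i + 1 then (1 : ℂ) else 0) :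
    X + Xᴴ + Y + Yᴴ
      = (Matrix.of ![![2, 1, 1], ![1, -1, 1], ![1, 1, -1]] : Matrix (Fin 3) (Fin 3) ℂ) := by
  subst hX hY
  have h3 : ((Real.sqrt 3 : ℝ) : ℂ)^2 = 3 := by
    rw [← Complex.ofReal_pow, Real.sq_sqrt (by norm_num)]; norm_num
  ext i j
  fin_cases i <;> fin_cases j <;>
    simp [Matrix.conjTranspose_apply, Matrix.diagonal, Matrix.add_apply, qval_exp,
      map_add, _root_.map_mul, Matrix.vecHead, Matrix.vecTail, Complex.conj_I,
      Complex.conj_ofReal, Fin.ext_iff] <;>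
    first
      | ring1
      | linear_combination (Complex.I^2/2) * h3 + (3/2 : ℂ) * Complex.I_sq
      | norm_num

lemma real_mat_norm :
    ‖Matrix.toEuclideanCLM (𝕜 := ℝ)
      (Matrix.of ![![2, 1, 1], ![1, -1, 1], ![1, 1, -1]] : Matrix (Fin 3) (Fin 3) ℝ)‖
        = 1 + Real.sqrt 3 := by
  set A : Matrix (Fin 3) (Fin 3) ℝ := Matrix.of ![![2, 1, 1], ![1, -1, 1], ![1, 1, -1]] with hA
  set T := Matrix.toEuclideanCLM (𝕜 := ℝ) A with hT
  have h3 : Real.sqrt 3 ^ 2 = 3 := Real.sq_sqrt (by norm_num)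
  have hc : (0:ℝ) ≤ 1 + Real.sqrt 3 := by positivity
  have happ : ∀ (x : EuclideanSpace ℝ (Fin 3)) (i : Fin 3),
      (T x) i = A.mulVec (fun j => x j) i := fun _ _ => rfl
  apply le_antisymm
  · apply ContinuousLinearMap.opNorm_le_bound _ hc
    intro x
    rw [EuclideanSpace.norm_eq, EuclideanSpace.norm_eq]
    rw [show (1 + Real.sqrt 3) * Real.sqrt (∑ i, ‖x i‖^2)
        = Real.sqrt ((1 + Real.sqrt 3)^2 * ∑ i, ‖x i‖^2) by
      rw [Real.sqrt_mul (sq_nonneg _), Real.sqrt_sq hc]]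
    apply Real.sqrt_le_sqrt
    simp only [happ, Fin.sum_univ_three, Real.norm_eq_abs, sq_abs]
    have e : ∀ i, A.mulVec (fun j => x j) i =
        ![2*(x 0)+(x 1)+(x 2), (x 0)-(x 1)+(x 2), (x 0)+(x 1)-(x 2)] i := by
      intro i
      fin_cases i <;>
        simp [hA, Matrix.mulVec, dotProduct, Fin.sum_univ_three] <;> ring
    rw [e 0, e 1, e 2]
    have := quad_ineq (x 0) (x 1) (x 2)
    simp only [Matrix.cons_val_zero, Matrix.cons_val_one, Matrix.head_cons,
      Matrix.cons_val_two, Matrix.tail_cons]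
    nlinarith [this, h3]
  · set v : EuclideanSpace ℝ (Fin 3) :=
      (WithLp.equiv 2 (Fin 3 → ℝ)).symm ![1 + Real.sqrt 3, 1, 1] with hv
    have hvne : v ≠ 0 := by
      intro h
      have : v 0 = 0 := by rw [h]; rfl
      simp [hv] at this
      nlinarith [this]
    have hvpos : 0 < ‖v‖ := norm_pos_iff.mpr hvne
    have hTv : T v = (1 + Real.sqrt 3) • v := by
      apply PiLp.ext
      intro i
      rw [happ]
      fin_cases i <;>
        simp [hv, hA, Matrix.mulVec, dotProduct, Fin.sum_univ_three,
          WithLp.equiv_symm_apply, PiLp.toLp_apply, PiLp.smul_apply, smul_eq_mul] <;> nlinarith [h3]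
    have h1 : (1 + Real.sqrt 3) * ‖v‖ ≤ ‖T‖ * ‖v‖ := by
      calc (1 + Real.sqrt 3) * ‖v‖ = ‖T v‖ := by
            rw [hTv, norm_smul, Real.norm_eq_abs, abs_of_nonneg hc]
        _ ≤ ‖T‖ * ‖v‖ := T.le_opNorm v
    exact le_of_mul_le_mul_right h1 hvpos

lemma complex_mat_norm :
    ‖Matrix.toEuclideanCLM (𝕜 := ℂ)
      (Matrix.of ![![2, 1, 1], ![1, -1, 1], ![1, 1, -1]] : Matrix (Fin 3) (Fin 3) ℂ)‖
        = 1 + Real.sqrt 3 := by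
  set A : Matrix (Fin 3) (Fin 3) ℂ := Matrix.of ![![2, 1, 1], ![1, -1, 1], ![1, 1, -1]] with hA
  set T := Matrix.toEuclideanCLM (𝕜 := ℂ) A with hT
  have h3 : Real.sqrt 3 ^ 2 = 3 := Real.sq_sqrt (by norm_num)
  have h3C : ((Real.sqrt 3 : ℝ) : ℂ)^2 = 3 := by
    rw [← Complex.ofReal_pow, Real.sq_sqrt (by norm_num)]; norm_num
  have hc : (0:ℝ) ≤ 1 + Real.sqrt 3 := by positivity
  have happ : ∀ (x : EuclideanSpace ℂ (Fin 3)) (i : Fin 3),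
      (T x) i = A.mulVec (fun j => x j) i := fun _ _ => rfl
  apply le_antisymm
  · apply ContinuousLinearMap.opNorm_le_bound _ hc
    intro x
    rw [EuclideanSpace.norm_eq, EuclideanSpace.norm_eq]
    rw [show (1 + Real.sqrt 3) * Real.sqrt (∑ i, ‖x i‖^2)
        = Real.sqrt ((1 + Real.sqrt 3)^2 * ∑ i, ‖x i‖^2) by
      rw [Real.sqrt_mul (sq_nonneg _), Real.sqrt_sq hc]]
    apply Real.sqrt_le_sqrt
    simp only [happ, Fin.sum_univ_three]
    have e : ∀ i, A.mulVec (fun j => x j) i =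
        ![2*(x 0)+(x 1)+(x 2), (x 0)-(x 1)+(x 2), (x 0)+(x 1)-(x 2)] i := by
      intro i
      fin_cases i <;>
        simp [hA, Matrix.mulVec, dotProduct, Fin.sum_univ_three] <;> ring
    rw [e 0, e 1, e 2]
    have := quad_ineq_C (x 0) (x 1) (x 2)
    simp only [Matrix.cons_val_zero, Matrix.cons_val_one, Matrix.head_cons,
      Matrix.cons_val_two, Matrix.tail_cons]
    nlinarith [this, h3]
  · set v : EuclideanSpace ℂ (Fin 3) :=
      (WithLp.equiv 2 (Fin 3 → ℂ)).symm ![((1 + Real.sqrt 3 : ℝ) : ℂ), 1, 1] with hv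
    have hvne : v ≠ 0 := by
      intro h
      have h0 : v 0 = 0 := by rw [h]; rfl
      have : ((1 + Real.sqrt 3 : ℝ) : ℂ) = 0 := h0
      rw [Complex.ofReal_eq_zero] at this
      nlinarith [Real.sqrt_nonneg 3]
    have hvpos : 0 < ‖v‖ := norm_pos_iff.mpr hvne
    have hTv : T v = ((1 + Real.sqrt 3 : ℝ) : ℂ) • v := by
      apply PiLp.ext
      intro i
      rw [happ]
      fin_cases i <;>
        simp [hv, hA, Matrix.mulVec, dotProduct, Fin.sum_univ_three,
          WithLp.equiv_symm_apply, PiLp.toLp_apply, PiLp.smul_apply, smul_eq_mul] <;>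
        push_cast <;> first | linear_combination -h3C | linear_combination 2*h3C | linear_combination h3C | ring1
    have h1 : (1 + Real.sqrt 3) * ‖v‖ ≤ ‖T‖ * ‖v‖ := by
      calc (1 + Real.sqrt 3) * ‖v‖ = ‖T v‖ := by
            rw [hTv, norm_smul, Complex.norm_real, Real.norm_eq_abs, abs_of_nonneg hc]
        _ ≤ ‖T‖ * ‖v‖ := T.le_opNorm v
    exact le_of_mul_le_mul_right h1 hvpos

/-- For `θ = 2π/3`, `q = e^{iθ}`, `X = diag(1, q, q²)` and `Y` the 3×3 cyclic shift matrix,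
`‖X + X* + Y + Y*‖ = 1 + √3`; equivalently, the real symmetric matrix
`[[2,1,1],[1,−1,1],[1,1,−1]]` has operator norm `1 + √3`. -/
theorem stmt_12 (X Y : Matrix (Fin 3) (Fin 3) ℂ)
    (hX : X = Matrix.diagonal (fun j : Fin 3 =>
      Complex.exp (2 * Real.pi * Complex.I / 3) ^ (j : ℕ)))
    (hY : Y = Matrix.of fun i j : Fin 3 => if j = i + 1 then (1 : ℂ) else 0) :
    ‖Matrix.toEuclideanCLM (𝕜 := ℂ) (X + Xᴴ + Y + Yᴴ)‖ = 1 + Real.sqrt 3 ∧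
    ‖Matrix.toEuclideanCLM (𝕜 := ℝ)
      (Matrix.of ![![2, 1, 1], ![1, -1, 1], ![1, 1, -1]] : Matrix (Fin 3) (Fin 3) ℝ)‖
        = 1 + Real.sqrt 3 := by
  refine ⟨?_, real_mat_norm⟩
  rw [mat_eq_aux X Y hX hY]
  exact complex_mat_norm
end

section
/- Let H ⊆ K be Hilbert spaces with orthogonal projection p : K → H, let P : Γ(K) → Γ(H) be the orthogonal projection of the symmetric Fock spaces, and let z ∈ K. Then the compression of the Weyl operator W(z) to Γ(H) satisfies P W(z)|_{Γ(H)} = e^{−‖p^⊥ z‖²/2} W(pz), where p^⊥ = 1 − p and W(pz) is the Weyl operator on Γ(H). In particular, this compression is e^{−‖p^⊥z‖²/2} times a unitary on Γ(H). -/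
open scoped InnerProductSpace
open ContinuousLinearMap

/-- Let `H ⊆ K` be Hilbert spaces with orthogonal projection `p : K → H`, let `Γ(K)` and `Γ(H)`
be the symmetric Fock spaces with exponential vectors `eK`, `eH` and Weyl operators `WK`, `WH`,
let `P : Γ(K) → Γ(H)` be the orthogonal projection (`P eK(x) = eH(px)`) and
`J : Γ(H) → Γ(K)` the inclusion (`J eH(y) = eK(y)`). Then the compression of `WK(z)` to `Γ(H)`
satisfies `P WK(z)|_{Γ(H)} = e^{−‖p^⊥z‖²/2} WH(pz)`; in particular it is `e^{−‖p^⊥z‖²/2}` times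
a unitary on `Γ(H)`. -/
theorem stmt_18 {K GK GH : Type*}
    [NormedAddCommGroup K] [InnerProductSpace ℂ K] [CompleteSpace K]
    [NormedAddCommGroup GK] [InnerProductSpace ℂ GK] [CompleteSpace GK]
    [NormedAddCommGroup GH] [InnerProductSpace ℂ GH] [CompleteSpace GH]
    (H : Submodule ℂ K) [CompleteSpace H]
    (eK : K → GK) (eH : H → GH)
    (heK : ∀ x y : K, ⟪eK x, eK y⟫_ℂ = Complex.exp ⟪x, y⟫_ℂ)
    (heH : ∀ x y : H, ⟪eH x, eH y⟫_ℂ = Complex.exp ⟪x, y⟫_ℂ)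
    (htotalH : Dense ((Submodule.span ℂ (Set.range eH) : Submodule ℂ GH) : Set GH))
    (WK : K → GK →L[ℂ] GK) (WH : H → GH →L[ℂ] GH)
    (hWK : ∀ z x : K, WK z (eK x) = Complex.exp (-(‖z‖ : ℂ) ^ 2 / 2 - ⟪z, x⟫_ℂ) • eK (z + x))
    (hWH : ∀ z x : H, WH z (eH x) = Complex.exp (-(‖z‖ : ℂ) ^ 2 / 2 - ⟪z, x⟫_ℂ) • eH (z + x))
    (hWHu : ∀ y : H, WH y ∈ unitary (GH →L[ℂ] GH))
    (P : GK →L[ℂ] GH) (J : GH →L[ℂ] GK)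
    (hP : ∀ x : K, P (eK x) = eH (H.orthogonalProjection x))
    (hJ : ∀ y : H, J (eH y) = eK y) :
    ∀ z : K, P ∘L WK z ∘L J =
      ((Real.exp (-‖z - (H.orthogonalProjection z : K)‖ ^ 2 / 2) : ℝ) : ℂ)
        • WH (H.orthogonalProjection z) := by
  intro z
  set p := H.orthogonalProjection with hp
  apply ContinuousLinearMap.ext_on htotalH
  rintro _ ⟨y, rfl⟩
  have hker : ∀ w : H, ⟪z - (p z : K), (w : K)⟫_ℂ = 0 := fun w =>
    Submodule.starProjection_inner_eq_zero z w w.2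
  have hinner : ⟪z, (y : K)⟫_ℂ = ⟪p z, y⟫_ℂ := by
    rw [Submodule.coe_inner]
    have h := hker y
    rw [inner_sub_left, sub_eq_zero] at h
    exact h
  have h0 : ⟪z - (p z : K), (p z : K)⟫_ℂ = 0 := hker (p z)
  have h0' : ⟪(p z : K), z - (p z : K)⟫_ℂ = 0 := by
    rw [← inner_conj_symm, h0, map_zero]
  have hnorm : (‖z‖ : ℝ) ^ 2 = ‖z - (p z : K)‖ ^ 2 + ‖(p z : K)‖ ^ 2 := by
    have hz : (z - (p z : K)) + (p z : K) = z := sub_add_cancel z _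
    have h2 := norm_add_sq (𝕜 := ℂ) (z - (p z : K)) (p z : K)
    rw [hz, h0] at h2
    simpa using h2
  have hpadd : p (z + (y : K)) = p z + y := by
    rw [map_add]
    congr 1
    exact Submodule.orthogonalProjection_mem_subspace_eq_self y
  simp only [ContinuousLinearMap.comp_apply, hJ, hWK, map_smul, hP, hpadd,
    ContinuousLinearMap.smul_apply, hWH, smul_smul]
  congr 1
  have hnc : ‖(p z : K)‖ = ‖p z‖ := rfl
  rw [Complex.ofReal_exp, ← Complex.exp_add]
  congr 1
  rw [hinner]
  have : ((‖z‖ : ℂ)) ^ 2 = ((‖z - (p z : K)‖ ^ 2 + ‖(p z : K)‖ ^ 2 : ℝ) : ℂ) := by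
    push_cast [← hnorm]; ring
  rw [this, hnc]
  push_cast
  ring
end
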